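/- Let φ: V1 → V2 be a functional bisimulation between charts C1 and C2 (mapping √ to √ and the start vertex to the start vertex). If s2 is a provable solution of C2 with respect to the proof system BBP, then s2 ∘ φ is a provable solution of C1, and it has the same principal value as s2. -/

import Mathlib

/-- Star expressions over an alphabet `A` (without the constant 1, with binary Kleene star). -/
inductive StarExp (A : Type) : Type
  | zero : StarExp A
  | act : A → StarExp A
  | sum : StarExp A → StarExp A → StarExp A
  | prod : StarExp A → StarExp A → StarExp A
  | star : StarExp A → StarExp A → StarExp A

namespace StarExp

/-- The star height of a star expression. -/
def height {A : Type} : StarExp A → ℕ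
  | zero => 0
  | act _ => 0
  | sum e1 e2 => max e1.height e2.height
  | prod e1 e2 => max e1.height e2.height
  | star e1 e2 => max (e1.height + 1) e2.height

end StarExp

/-- Provable equality in the proof system BBP: equational logic together with the
axioms (B1)–(B7), (BKS1), (BKS2) and the fixed-point rule RSP*. -/
inductive BBP {A : Type} : StarExp A → StarExp A → Prop
  | refl (e : StarExp A) : BBP e e
  | symm {e f : StarExp A} : BBP e f → BBP f e
  | trans {e f g : StarExp A} : BBP e f → BBP f g → BBP e g
  | sum_congr {e1 e2 f1 f2 : StarExp A} :
      BBP e1 f1 → BBP e2 f2 → BBP (.sum e1 e2) (.sum f1 f2)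
  | prod_congr {e1 e2 f1 f2 : StarExp A} :
      BBP e1 f1 → BBP e2 f2 → BBP (.prod e1 e2) (.prod f1 f2)
  | star_congr {e1 e2 f1 f2 : StarExp A} :
      BBP e1 f1 → BBP e2 f2 → BBP (.star e1 e2) (.star f1 f2)
  | B1 (x y : StarExp A) : BBP (.sum x y) (.sum y x)
  | B2 (x y z : StarExp A) : BBP (.sum (.sum x y) z) (.sum x (.sum y z))
  | B3 (x : StarExp A) : BBP (.sum x x) x
  | B4 (x y z : StarExp A) : BBP (.prod (.sum x y) z) (.sum (.prod x z) (.prod y z))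
  | B5 (x y z : StarExp A) : BBP (.prod (.prod x y) z) (.prod x (.prod y z))
  | B6 (x : StarExp A) : BBP (.sum x .zero) x
  | B7 (x : StarExp A) : BBP (.prod .zero x) .zero
  | BKS1 (x y : StarExp A) : BBP (.sum (.prod x (.star x y)) y) (.star x y)
  | BKS2 (x y z : StarExp A) : BBP (.prod (.star x y) z) (.star x (.prod y z))
  | RSP {x y z : StarExp A} : BBP x (.sum (.prod y x) z) → BBP x (.star y z)

/-- The sum `Σ_{i=1}^k e_i` of a list of star expressions: `0` for the empty list,
`e` for a singleton, and otherwise nested to the left. -/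
def sumList {A : Type} : List (StarExp A) → StarExp A
  | [] => StarExp.zero
  | e :: es => es.foldl StarExp.sum e

/-- A chart: a rooted labelled transition system with a start vertex and a
termination predicate marking the termination sink √. -/
structure Chart (V : Type) (A : Type) : Type where
  start : V
  term : V → Prop
  Tr : V → A → V → Prop

namespace Chart

variable {A : Type}

/-- `B` is a bisimulation between the charts `C1` and `C2`: it relates the start
vertices, and related pairs satisfy the forth, back and termination conditions. -/
def IsBisim {V1 V2 : Type} (C1 : Chart V1 A) (C2 : Chart V2 A)
    (B : V1 → V2 → Prop) : Prop :=
  B C1.start C2.start ∧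
  ∀ u v, B u v →
    (∀ (a : A) (u' : V1), C1.Tr u a u' → ∃ v' : V2, C2.Tr v a v' ∧ B u' v') ∧
    (∀ (a : A) (v' : V2), C2.Tr v a v' → ∃ u' : V1, C1.Tr u a u' ∧ B u' v') ∧
    (C1.term u ↔ C2.term v)

/-- Two charts are bisimilar if there is a bisimulation between them. -/
def Bisimilar {V1 V2 : Type} (C1 : Chart V1 A) (C2 : Chart V2 A) : Prop :=
  ∃ B : V1 → V2 → Prop, IsBisim C1 C2 B

/-- A bisimulation on a single chart (forth, back and termination conditions only;
it need not relate the start vertex to itself). -/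
def IsSelfBisim {V : Type} (C : Chart V A) (B : V → V → Prop) : Prop :=
  ∀ u v, B u v →
    (∀ (a : A) (u' : V), C.Tr u a u' → ∃ v' : V, C.Tr v a v' ∧ B u' v') ∧
    (∀ (a : A) (v' : V), C.Tr v a v' → ∃ u' : V, C.Tr u a u' ∧ B u' v') ∧
    (C.term u ↔ C.term v)

end Chart

/-- `s` is a provable solution of the chart `C`: for every non-terminating vertex
`v`, with `as` an enumeration of the actions of the transitions from `v` to the
termination sink √ and `bs` an enumeration of the remaining transitions from `v`,
BBP proves `s(v) = (Σ_{i=1}^m a_i) + (Σ_{j=1}^n b_j · s(w_j))`. -/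
def IsSolution {V A : Type} (C : Chart V A) (s : V → StarExp A) : Prop :=
  ∀ v : V, ¬ C.term v →
    ∃ (as : List A) (bs : List (A × V)),
      (∀ a : A, a ∈ as ↔ ∃ w : V, C.term w ∧ C.Tr v a w) ∧
      (∀ p : A × V, p ∈ bs ↔ (¬ C.term p.2 ∧ C.Tr v p.1 p.2)) ∧
      BBP (s v)
        (StarExp.sum (sumList (as.map StarExp.act))
          (sumList (bs.map fun p => StarExp.prod (StarExp.act p.1) (s p.2))))

theorem bbp_foldl {A : Type} : ∀ (l : List (StarExp A)) (e : StarExp A),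
    BBP (l.foldl .sum e) (.sum e (sumList l))
  | [], e => .symm (.B6 e)
  | f :: l, e => by
    have h1 := bbp_foldl l (StarExp.sum e f)
    have h2 := bbp_foldl l f
    exact .trans h1 (.trans (.B2 e f (sumList l)) (.sum_congr (.refl e) (.symm h2)))

theorem bbp_mem {A : Type} (e : StarExp A) :
    ∀ (l : List (StarExp A)), e ∈ l → BBP (.sum e (sumList l)) (sumList l) := by
  intro l
  induction l with
  | nil => intro h; cases h
  | cons f l ih =>
    intro h
    have hc := bbp_foldl l f
    rcases List.mem_cons.1 h with rfl | hl
    · exact .trans (.sum_congr (.refl e) hc)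
        (.trans (.symm (.B2 e e _))
          (.trans (.sum_congr (.B3 e) (.refl _)) (.symm hc)))
    · refine .trans (.sum_congr (.refl e) hc) ?_
      exact .trans (.symm (.B2 e f _))
        (.trans (.sum_congr (.B1 e f) (.refl _))
          (.trans (.B2 f e _)
            (.trans (.sum_congr (.refl f) (ih hl)) (.symm hc))))

theorem bbp_subset {A : Type} : ∀ (l1 l2 : List (StarExp A)), (∀ e ∈ l1, e ∈ l2) →
    BBP (.sum (sumList l1) (sumList l2)) (sumList l2) := by
  intro l1
  induction l1 with
  | nil => intro l2 _; exact .trans (.B1 _ _) (.B6 _)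
  | cons e l1 ih =>
    intro l2 h
    have hc := bbp_foldl l1 e
    refine .trans (.sum_congr hc (.refl _)) ?_
    refine .trans (.B2 e (sumList l1) (sumList l2)) ?_
    refine .trans (.sum_congr (.refl e)
      (ih l2 fun x hx => h x (List.mem_cons_of_mem _ hx))) ?_
    exact bbp_mem e l2 (h e List.mem_cons_self)

theorem bbp_setEq {A : Type} (l1 l2 : List (StarExp A)) (h : ∀ e, e ∈ l1 ↔ e ∈ l2) :
    BBP (sumList l1) (sumList l2) := by
  have h1 := bbp_subset l1 l2 (fun e he => (h e).1 he)
  have h2 := bbp_subset l2 l1 (fun e he => (h e).2 he)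
  exact .trans (.symm h2) (.trans (.B1 _ _) h1)

/-- If `φ` is a functional bisimulation from the chart `C1` to the chart `C2`
(mapping the start vertex to the start vertex and √ to √) and `s2` is a provable
solution of `C2`, then `s2 ∘ φ` is a provable solution of `C1` with the same
principal value as `s2`. -/
theorem solution_pullback {V1 V2 A : Type} [Finite V1] [Finite V2]
    (C1 : Chart V1 A) (C2 : Chart V2 A) (φ : V1 → V2)
    (hstart : φ C1.start = C2.start)
    (hforth : ∀ (u : V1) (a : A) (u' : V1), C1.Tr u a u' → C2.Tr (φ u) a (φ u'))
    (hback : ∀ (u : V1) (a : A) (w' : V2), C2.Tr (φ u) a w' →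
      ∃ u' : V1, C1.Tr u a u' ∧ φ u' = w')
    (hterm : ∀ u : V1, C1.term u ↔ C2.term (φ u))
    (s2 : V2 → StarExp A) (hs2 : IsSolution C2 s2) :
    IsSolution C1 (fun u => s2 (φ u)) ∧ s2 (φ C1.start) = s2 C2.start := by
  classical
  have := Fintype.ofFinite V1
  refine ⟨?_, by rw [hstart]⟩
  intro v hv
  have hv2 : ¬ C2.term (φ v) := fun h => hv ((hterm v).2 h)
  obtain ⟨as, bs, has, hbs, heq⟩ := hs2 (φ v) hv2
  set bs' : List (A × V1) :=
    ((bs.map Prod.fst).flatMap fun a =>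
      (Finset.univ : Finset V1).toList.map (fun u : V1 => (a, u))).filter
      (fun p => decide (¬ C1.term p.2 ∧ C1.Tr v p.1 p.2)) with hbs'def
  have hmem' : ∀ p : A × V1, p ∈ bs' ↔ (¬ C1.term p.2 ∧ C1.Tr v p.1 p.2) := by
    intro p
    constructor
    · intro hp
      have := List.of_mem_filter hp
      simpa using this
    · intro hp
      apply List.mem_filter.2
      refine ⟨?_, by simpa using hp⟩
      apply List.mem_flatMap.2
      refine ⟨p.1, ?_, ?_⟩
      · apply List.mem_map.2
        refine ⟨(p.1, φ p.2), ?_, rfl⟩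
        exact (hbs (p.1, φ p.2)).2 ⟨fun h => hp.1 ((hterm p.2).2 h), hforth v p.1 p.2 hp.2⟩
      · simp
  refine ⟨as, bs', ?_, hmem', ?_⟩
  · intro a
    rw [has a]
    constructor
    · rintro ⟨w', hw', htw'⟩
      obtain ⟨u', hu', rfl⟩ := hback v a w' htw'
      exact ⟨u', (hterm u').2 hw', hu'⟩
    · rintro ⟨w, hw, htw⟩
      exact ⟨φ w, (hterm w).1 hw, hforth v a w htw⟩
  · refine .trans heq (.sum_congr (.refl _) (bbp_setEq _ _ ?_))
    intro e
    simp only [List.mem_map]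
    constructor
    · rintro ⟨q, hq, rfl⟩
      obtain ⟨hqt, hqtr⟩ := (hbs q).1 hq
      obtain ⟨u', hu', hphi⟩ := hback v q.1 q.2 hqtr
      refine ⟨(q.1, u'), (hmem' (q.1, u')).2 ⟨fun h => hqt (hphi ▸ (hterm u').1 h), hu'⟩, ?_⟩
      simp [hphi]
    · rintro ⟨p, hp, rfl⟩
      obtain ⟨hpt, hptr⟩ := (hmem' p).1 hp
      exact ⟨(p.1, φ p.2), (hbs (p.1, φ p.2)).2 ⟨fun h => hpt ((hterm p.2).2 h), hforth v p.1 p.2 hptr⟩, rfl⟩
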